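/- Let A₀ = {0, 1, 2, ..., k−2} where k ≥ 2 is even, and let S = a^{A₀} ∪ {b} ⊆ BS(1,2) (so |S| = k). Then |S²| = 3.5k − 4, i.e., |S²| = (7k − 8)/2. -/
import Mathlib


open Pointwise

def BSRel (n : ℤ) : Set (FreeGroup Bool) :=
  {FreeGroup.of true * FreeGroup.of false * (FreeGroup.of false * FreeGroup.of true ^ n)⁻¹}

/-- The Baumslag–Solitar group `BS(1,n) = ⟨a, b ∣ a b = b aⁿ⟩`. -/
abbrev BS (n : ℤ) : Type := PresentedGroup (BSRel n)

noncomputable instance (n : ℤ) : DecidableEq (BS n) := Classical.decEq _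

/-- The generator `a` of `BS(1,n)`. -/
def bsa (n : ℤ) : BS n := PresentedGroup.of true

/-- The generator `b` of `BS(1,n)`. -/
def bsb (n : ℤ) : BS n := PresentedGroup.of false

noncomputable def bsf : Bool → Equiv.Perm ℚ := fun x =>
  if x then Equiv.addRight (1:ℚ) else Equiv.mulLeft₀ (2:ℚ)⁻¹ (by norm_num)

lemma bsrel_holds : ∀ r ∈ BSRel 2, FreeGroup.lift bsf r = 1 := by
  rintro r hr
  simp only [BSRel, Set.mem_singleton_iff] at hr
  subst hr
  simp only [map_mul, map_inv, map_zpow, FreeGroup.lift_apply_of, bsf, if_true, if_false]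
  rw [mul_inv_eq_one]
  ext x
  simp [Equiv.Perm.mul_apply, Equiv.coe_addRight, Equiv.mulLeft₀_apply]
  ring

noncomputable def bsφ : BS 2 →* Equiv.Perm ℚ := PresentedGroup.toGroup bsrel_holds

lemma phi_a (x : ℚ) : bsφ (bsa 2) x = x + 1 := by
  show bsφ (PresentedGroup.of true) x = x + 1
  rw [bsφ, PresentedGroup.toGroup.of]
  simp [bsf]

lemma phi_b (x : ℚ) : bsφ (bsb 2) x = 2⁻¹ * x := by
  show bsφ (PresentedGroup.of false) x = 2⁻¹ * x
  rw [bsφ, PresentedGroup.toGroup.of]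
  simp [bsf]

lemma phi_a_pow (n : ℕ) (x : ℚ) : bsφ (bsa 2 ^ n) x = x + n := by
  induction n generalizing x with
  | zero => simp
  | succ m ih =>
    rw [pow_succ, map_mul, Equiv.Perm.mul_apply, phi_a, ih]
    push_cast; ring

lemma bs_rel : bsa 2 * bsb 2 = bsb 2 * bsa 2 ^ 2 := by
  have h1 : PresentedGroup.mk (BSRel 2)
      (FreeGroup.of true * FreeGroup.of false * (FreeGroup.of false * FreeGroup.of true ^ (2:ℤ))⁻¹) = 1 :=
    (QuotientGroup.eq_one_iff _).2 (Subgroup.subset_normalClosure (by simp [BSRel]))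
  rw [map_mul, map_mul, map_inv, map_mul, map_zpow, mul_inv_eq_one] at h1
  have : (PresentedGroup.mk (BSRel 2)) (FreeGroup.of true) = bsa 2 := rfl
  have hb : (PresentedGroup.mk (BSRel 2)) (FreeGroup.of false) = bsb 2 := rfl
  rw [this, hb] at h1
  rw [h1, zpow_two, pow_two]

lemma phi_g (m : ℕ) (x : ℚ) : bsφ (bsb 2 * bsa 2 ^ m) x = 2⁻¹ * (x + m) := by
  rw [map_mul, Equiv.Perm.mul_apply, phi_a_pow, phi_b]

lemma phi_bb (x : ℚ) : bsφ (bsb 2 * bsb 2) x = 2⁻¹ * (2⁻¹ * x) := by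
  rw [map_mul, Equiv.Perm.mul_apply, phi_b, phi_b]

lemma f_inj : Function.Injective (fun i : ℕ => bsa 2 ^ i) := by
  intro n m h
  have h0 := congrArg (fun t => bsφ t (0:ℚ)) h
  simp only [phi_a_pow, zero_add] at h0
  exact_mod_cast h0

lemma g_inj : Function.Injective (fun m : ℕ => bsb 2 * bsa 2 ^ m) := by
  intro n m h
  have h0 := congrArg (fun t => bsφ t (0:ℚ)) h
  simp only [phi_g, zero_add] at h0
  have : (n:ℚ) = m := by
    field_simp at h0
    exact_mod_cast h0
  exact_mod_cast this

lemma f_ne_g (n m : ℕ) : bsa 2 ^ n ≠ bsb 2 * bsa 2 ^ m := by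
  intro h
  have h0 := congrArg (fun t => bsφ t (0:ℚ)) h
  have h2 := congrArg (fun t => bsφ t (2:ℚ)) h
  simp only [phi_a_pow, phi_g, zero_add] at h0 h2
  linarith

lemma f_ne_bb (n : ℕ) : bsa 2 ^ n ≠ bsb 2 * bsb 2 := by
  intro h
  have h0 := congrArg (fun t => bsφ t (0:ℚ)) h
  have h2 := congrArg (fun t => bsφ t (2:ℚ)) h
  simp only [phi_a_pow, phi_bb, zero_add] at h0 h2
  norm_num at h0 h2
  linarith

lemma g_ne_bb (m : ℕ) : bsb 2 * bsa 2 ^ m ≠ bsb 2 * bsb 2 := by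
  intro h
  have h2 := congrArg (fun t => bsφ t (2:ℚ)) h
  simp only [phi_g, phi_bb] at h2
  have hm : (0:ℚ) ≤ (m:ℚ) := Nat.cast_nonneg m
  norm_num at h2
  linarith

lemma a_pow_mul_b (i : ℕ) : bsa 2 ^ i * bsb 2 = bsb 2 * bsa 2 ^ (2*i) := by
  induction i with
  | zero => simp
  | succ n ih =>
    rw [pow_succ', mul_assoc, ih, ← mul_assoc, bs_rel, mul_assoc, ← pow_add,
      show 2 + 2*n = 2*(n+1) from by omega]

theorem stmt13 (k : ℕ) (hk : 2 ≤ k) (hke : Even k) (S : Finset (BS 2))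
    (hS : S = (Finset.range (k - 1)).image (fun i => bsa 2 ^ i) ∪ {bsb 2}) :
    2 * (S * S).card = 7 * k - 8 := by
  obtain ⟨t, ht⟩ := hke
  classical
  have h1 : ((Finset.range (k-1)).image (fun i => bsa 2 ^ i)) *
      ((Finset.range (k-1)).image (fun i => bsa 2 ^ i)) =
      (Finset.range (2*k-3)).image (fun i => bsa 2 ^ i) := by
    ext x
    simp only [Finset.mem_mul, Finset.mem_image, Finset.mem_range]
    constructor
    · rintro ⟨y, ⟨i, hi, rfl⟩, z, ⟨j, hj, rfl⟩, rfl⟩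
      exact ⟨i + j, by omega, pow_add _ _ _⟩
    · rintro ⟨n, hn, rfl⟩
      rcases le_or_gt n (k-2) with h | h
      · exact ⟨_, ⟨n, by omega, rfl⟩, _, ⟨0, by omega, rfl⟩, by rw [← pow_add, Nat.add_zero]⟩
      · exact ⟨_, ⟨k-2, by omega, rfl⟩, _, ⟨n-(k-2), by omega, rfl⟩,
          by rw [← pow_add, show k-2+(n-(k-2)) = n from by omega]⟩
  have h2 : ((Finset.range (k-1)).image (fun i => bsa 2 ^ i)) * {bsb 2} =
      ((Finset.range (k-1)).image (fun i => 2*i)).image (fun m => bsb 2 * bsa 2 ^ m) := by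
    ext x
    simp only [Finset.mem_mul, Finset.mem_image, Finset.mem_range, Finset.mem_singleton]
    constructor
    · rintro ⟨y, ⟨i, hi, rfl⟩, z, rfl, rfl⟩
      exact ⟨2*i, ⟨i, hi, rfl⟩, (a_pow_mul_b i).symm⟩
    · rintro ⟨m, ⟨i, hi, rfl⟩, rfl⟩
      exact ⟨_, ⟨i, hi, rfl⟩, _, rfl, a_pow_mul_b i⟩
  have h3 : ({bsb 2} : Finset (BS 2)) * ((Finset.range (k-1)).image (fun i => bsa 2 ^ i)) =
      (Finset.range (k-1)).image (fun m => bsb 2 * bsa 2 ^ m) := by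
    ext x
    simp only [Finset.mem_mul, Finset.mem_image, Finset.mem_range, Finset.mem_singleton]
    constructor
    · rintro ⟨y, rfl, z, ⟨i, hi, rfl⟩, rfl⟩
      exact ⟨i, hi, rfl⟩
    · rintro ⟨i, hi, rfl⟩
      exact ⟨_, rfl, _, ⟨i, hi, rfl⟩, rfl⟩
  have hSS : S * S = (Finset.range (2*k-3)).image (fun i => bsa 2 ^ i) ∪
      (((Finset.range (k-1)).image (fun i => 2*i) ∪ Finset.range (k-1)).image
        (fun m => bsb 2 * bsa 2 ^ m)) ∪ {bsb 2 * bsb 2} := by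
    rw [hS, Finset.union_mul, Finset.mul_union, Finset.mul_union,
      Finset.singleton_mul_singleton, h1, h2, h3, Finset.image_union]
    ext x
    simp only [Finset.mem_union, Finset.mem_singleton]
    tauto
  have d12 : Disjoint ((Finset.range (2*k-3)).image (fun i => bsa 2 ^ i))
      (((Finset.range (k-1)).image (fun i => 2*i) ∪ Finset.range (k-1)).image
        (fun m => bsb 2 * bsa 2 ^ m)) := by
    rw [Finset.disjoint_left]
    intro x hx1 hx2
    simp only [Finset.mem_image] at hx1 hx2
    obtain ⟨n, _, rfl⟩ := hx1
    obtain ⟨m, _, hm⟩ := hx2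
    exact f_ne_g n m hm.symm
  have dbb : bsb 2 * bsb 2 ∉ (Finset.range (2*k-3)).image (fun i => bsa 2 ^ i) ∪
      (((Finset.range (k-1)).image (fun i => 2*i) ∪ Finset.range (k-1)).image
        (fun m => bsb 2 * bsa 2 ^ m)) := by
    simp only [Finset.mem_union, Finset.mem_image, not_or, not_exists, not_and]
    constructor
    · intro n _ hn
      exact f_ne_bb n hn
    · intro m _ hm
      exact g_ne_bb m hm
  have htwoinj : Function.Injective (fun i : ℕ => 2*i) := fun i j h => by
    simp only at h; omega
  have hDRint : ((Finset.range (k-1)).image (fun i => 2*i)) ∩ Finset.range (k-1) =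
      (Finset.range (k/2)).image (fun i => 2*i) := by
    ext x
    simp only [Finset.mem_inter, Finset.mem_image, Finset.mem_range]
    constructor
    · rintro ⟨⟨i, hi, rfl⟩, hx⟩
      exact ⟨i, by omega, rfl⟩
    · rintro ⟨i, hi, rfl⟩
      exact ⟨⟨i, by omega, rfl⟩, by omega⟩
  have hcardDR : ((Finset.range (k-1)).image (fun i => 2*i) ∪ Finset.range (k-1)).card + k/2
      = (k-1) + (k-1) := by
    have hc := Finset.card_union_add_card_inter
      ((Finset.range (k-1)).image (fun i => 2*i)) (Finset.range (k-1))
    rw [hDRint, Finset.card_image_of_injective _ htwoinj,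
      Finset.card_image_of_injective _ htwoinj] at hc
    simpa using hc
  rw [hSS, Finset.card_union_of_disjoint (Finset.disjoint_singleton_right.2 dbb),
    Finset.card_union_of_disjoint d12, Finset.card_image_of_injective _ f_inj,
    Finset.card_image_of_injective _ g_inj, Finset.card_range, Finset.card_singleton]
  omega
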